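/- Let H be a real Hilbert space, K : H → H a bounded self-adjoint linear operator, λ₁ > 0 a real number, and φ₁ ∈ H a unit vector with K φ₁ = λ₁ φ₁. Suppose there exists ρ ∈ [0, λ₁) such that ‖K x‖ ≤ ρ ‖x‖ for every x ∈ H orthogonal to φ₁. Let G : H → H be a bounded linear operator and let ψ ∈ H satisfy ⟨ψ, φ₁⟩ ≠ 0. Then for all sufficiently large integers t the inner product ⟨K^t ψ, K^{t−1} ψ⟩ is strictly positive, and the ratio ⟨K^t ψ, G (K^{t−1} ψ)⟩ / ⟨K^t ψ, K^{t−1} ψ⟩ converges to ⟨φ₁, G φ₁⟩ as t → ∞. -/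

import Mathlib

open Filter
open scoped InnerProductSpace

/-- Abstract spectral-gap mechanism: for a bounded self-adjoint operator `K` with top
eigenvalue `λ₁ > 0`, simple eigenvector `φ₁` and spectral gap (norm bound `ρ < λ₁` on the
orthogonal complement of `φ₁`), the normalized bilinear ratios converge to the
top-eigenvector contribution, independently of the boundary data `ψ`. -/
theorem stmt0 {H : Type*} [NormedAddCommGroup H] [InnerProductSpace ℝ H] [CompleteSpace H]
    (K : H →L[ℝ] H) (hK : IsSelfAdjoint K)
    (lam₁ : ℝ) (hlam₁ : 0 < lam₁) (phi₁ : H) (hphi₁ : ‖phi₁‖ = 1)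
    (heig : K phi₁ = lam₁ • phi₁)
    (rho : ℝ) (hrho : rho ∈ Set.Ico 0 lam₁)
    (hgap : ∀ x : H, ⟪x, phi₁⟫_ℝ = 0 → ‖K x‖ ≤ rho * ‖x‖)
    (G : H →L[ℝ] H) (psi : H) (hpsi : ⟪psi, phi₁⟫_ℝ ≠ 0) :
    (∀ᶠ t : ℕ in atTop, 0 < ⟪(K ^ t) psi, (K ^ (t - 1)) psi⟫_ℝ) ∧
    Tendsto (fun t : ℕ =>
        ⟪(K ^ t) psi, G ((K ^ (t - 1)) psi)⟫_ℝ / ⟪(K ^ t) psi, (K ^ (t - 1)) psi⟫_ℝ)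
      atTop (nhds ⟪phi₁, G phi₁⟫_ℝ) := by
  obtain ⟨hrho0, hrholt⟩ := hrho
  set a : ℝ := ⟪psi, phi₁⟫_ℝ with ha
  set w : H := psi - a • phi₁ with hw
  have hphi_inner : ⟪phi₁, phi₁⟫_ℝ = 1 := by
    rw [real_inner_self_eq_norm_sq, hphi₁]; norm_num
  have hwperp : ⟪w, phi₁⟫_ℝ = 0 := by
    rw [hw, inner_sub_left, real_inner_smul_left, hphi_inner, ← ha, mul_one, sub_self]
  have hperp : ∀ x : H, ⟪x, phi₁⟫_ℝ = 0 → ⟪K x, phi₁⟫_ℝ = 0 := by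
    intro x hx
    have h1 : ⟪K x, phi₁⟫_ℝ = ⟪x, K phi₁⟫_ℝ := hK.isSymmetric x phi₁
    rw [h1, heig, real_inner_smul_right, hx, mul_zero]
  have happ : ∀ (t : ℕ) (x : H), (K ^ (t + 1)) x = K ((K ^ t) x) := by
    intro t x
    rw [pow_succ']
    rfl
  have hKt_w_perp : ∀ t : ℕ, ⟪(K ^ t) w, phi₁⟫_ℝ = 0 := by
    intro t
    induction t with
    | zero => simpa using hwperp
    | succ n ih => rw [happ]; exact hperp _ ih
  have hKt_w_norm : ∀ t : ℕ, ‖(K ^ t) w‖ ≤ rho ^ t * ‖w‖ := by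
    intro t
    induction t with
    | zero => simp
    | succ n ih =>
      rw [happ]
      calc ‖K ((K ^ n) w)‖ ≤ rho * ‖(K ^ n) w‖ := hgap _ (hKt_w_perp n)
        _ ≤ rho * (rho ^ n * ‖w‖) := mul_le_mul_of_nonneg_left ih hrho0
        _ = rho ^ (n + 1) * ‖w‖ := by ring
  have hKt_phi : ∀ t : ℕ, (K ^ t) phi₁ = lam₁ ^ t • phi₁ := by
    intro t
    induction t with
    | zero => simp
    | succ n ih =>
      rw [happ, ih, map_smul, heig, smul_smul, pow_succ]
  have hane : ∀ t : ℕ, a * lam₁ ^ t ≠ 0 := fun t =>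
    mul_ne_zero hpsi (pow_ne_zero t hlam₁.ne')
  set u : ℕ → H := fun t => phi₁ + (a * lam₁ ^ t)⁻¹ • ((K ^ t) w) with hu
  have hKu : ∀ t : ℕ, (K ^ t) psi = (a * lam₁ ^ t) • u t := by
    intro t
    have hpsi_eq : psi = a • phi₁ + w := by rw [hw]; abel
    rw [hpsi_eq, map_add, map_smul, hKt_phi, hu]
    rw [smul_add, smul_smul, smul_inv_smul₀ (hane t)]
  have hu_lim : Tendsto u atTop (nhds phi₁) := by
    have h0 : Tendsto (fun t : ℕ => (a * lam₁ ^ t)⁻¹ • ((K ^ t) w)) atTop (nhds 0) := by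
      apply squeeze_zero_norm (a := fun t : ℕ => (|a|⁻¹ * ‖w‖) * (rho / lam₁) ^ t)
      · intro t
        rw [norm_smul, Real.norm_eq_abs, abs_inv, abs_mul, abs_pow,
          abs_of_pos hlam₁]
        have hb : ‖(K ^ t) w‖ ≤ rho ^ t * ‖w‖ := hKt_w_norm t
        calc (|a| * lam₁ ^ t)⁻¹ * ‖(K ^ t) w‖
            ≤ (|a| * lam₁ ^ t)⁻¹ * (rho ^ t * ‖w‖) := by
              apply mul_le_mul_of_nonneg_left hb
              positivity
          _ = |a|⁻¹ * ‖w‖ * (rho / lam₁) ^ t := by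
              rw [div_pow, mul_inv]
              field_simp
      · have : Tendsto (fun t : ℕ => (rho / lam₁) ^ t) atTop (nhds 0) := by
          apply tendsto_pow_atTop_nhds_zero_of_lt_one (by positivity)
          rw [div_lt_one hlam₁]; exact hrholt
        simpa using this.const_mul (|a|⁻¹ * ‖w‖)
    have := h0.const_add phi₁
    rw [add_zero] at this
    exact this
  have hu1_lim : Tendsto (fun t : ℕ => u (t - 1)) atTop (nhds phi₁) :=
    hu_lim.comp (tendsto_sub_atTop_nat 1)
  have hden : Tendsto (fun t : ℕ => ⟪u t, u (t - 1)⟫_ℝ) atTop (nhds 1) := by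
    have := hu_lim.inner (𝕜 := ℝ) hu1_lim
    rwa [hphi_inner] at this
  have hnum : Tendsto (fun t : ℕ => ⟪u t, G (u (t - 1))⟫_ℝ) atTop
      (nhds ⟪phi₁, G phi₁⟫_ℝ) :=
    hu_lim.inner (𝕜 := ℝ) ((G.continuous.tendsto _).comp hu1_lim)
  set c : ℕ → ℝ := fun t => (a * lam₁ ^ t) * (a * lam₁ ^ (t - 1)) with hc
  have hcpos : ∀ t : ℕ, 0 < c t := by
    intro t
    have : c t = (a * a) * (lam₁ ^ t * lam₁ ^ (t - 1)) := by rw [hc]; ring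
    rw [this]
    exact mul_pos (mul_self_pos.mpr hpsi) (mul_pos (pow_pos hlam₁ _) (pow_pos hlam₁ _))
  have hinner_eq : ∀ t : ℕ, ⟪(K ^ t) psi, (K ^ (t - 1)) psi⟫_ℝ
      = c t * ⟪u t, u (t - 1)⟫_ℝ := by
    intro t
    rw [hKu t, hKu (t - 1), real_inner_smul_left, real_inner_smul_right, hc]
    ring
  have hinnerG_eq : ∀ t : ℕ, ⟪(K ^ t) psi, G ((K ^ (t - 1)) psi)⟫_ℝ
      = c t * ⟪u t, G (u (t - 1))⟫_ℝ := by
    intro t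
    rw [hKu t, hKu (t - 1), map_smul, real_inner_smul_left, real_inner_smul_right, hc]
    ring
  have hpos_ev : ∀ᶠ t : ℕ in atTop, 0 < ⟪u t, u (t - 1)⟫_ℝ :=
    hden.eventually (eventually_gt_nhds one_pos)
  constructor
  · filter_upwards [hpos_ev] with t ht
    rw [hinner_eq t]
    exact mul_pos (hcpos t) ht
  · have hratio : Tendsto (fun t : ℕ => ⟪u t, G (u (t - 1))⟫_ℝ / ⟪u t, u (t - 1)⟫_ℝ)
        atTop (nhds ⟪phi₁, G phi₁⟫_ℝ) := by
      have := hnum.div hden one_ne_zero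
      rw [div_one] at this
      exact this
    refine hratio.congr fun t => ?_
    rw [hinner_eq t, hinnerG_eq t, mul_div_mul_left _ _ (hcpos t).ne']
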